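/- Let p^{(1)},…,p^{(m)} ∈ ℝ^n, β ∈ ℝ^n, s_t ≥ 0, and define u₀ and u₀' as: u₀(x) = log(∑_i exp(⟨p^{(i)}, x⟩)), u₀'(t,x) = log(∑_i exp(⟨p^{(i)}, x − s_t β⟩)) − s_t M where M = max_i ⟨p^{(i)}, −β⟩. Then lim_{s→∞} (u₀'(t, −sβ) − u₀(−sβ)) = 0; consequently sup_{x∈ℝ^n} (u₀'(t,x) − u₀(x)) = 0. -/

import Mathlib

open Finset Filter

theorem stmt4 (n m : ℕ) (hm : 0 < m) (p : Fin m → Fin n → ℝ)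
    (β : Fin n → ℝ) (hβ : β ≠ 0) (st : ℝ) (hst : 0 ≤ st)
    (M : ℝ)
    (hM : M = Finset.univ.sup' (Finset.univ_nonempty_iff.mpr ⟨⟨0, hm⟩⟩)
          (fun i => ∑ j, p i j * (-β j)))
    (u₀ u₀' : (Fin n → ℝ) → ℝ)
    (hu₀ : ∀ y, u₀ y = Real.log (∑ i, Real.exp (∑ j, p i j * y j)))
    (hu₀' : ∀ y, u₀' y =
      Real.log (∑ i, Real.exp (∑ j, p i j * (y j - st * β j))) - st * M) :
    Tendsto (fun s : ℝ => u₀' (-(s • β)) - u₀ (-(s • β))) atTop (nhds 0) ∧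
    (⨆ x : Fin n → ℝ, (u₀' x - u₀ x)) = 0 := by
  have hne : (Finset.univ : Finset (Fin m)).Nonempty :=
    Finset.univ_nonempty_iff.mpr ⟨⟨0, hm⟩⟩
  set c : Fin m → ℝ := fun i => ∑ j, p i j * (-β j) with hc
  have hcM : ∀ i, c i ≤ M := fun i => hM ▸ Finset.le_sup' _ (Finset.mem_univ i)
  obtain ⟨i₀, -, hi₀⟩ := Finset.exists_mem_eq_sup' hne (fun i => ∑ j, p i j * (-β j))
  have hMi₀ : M = c i₀ := by rw [hM, hi₀]
  set g : ℝ → ℝ := fun s => ∑ i, Real.exp (s * (c i - M)) with hg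
  have hgpos : ∀ s, 0 < g s := fun s => Finset.sum_pos (fun i _ => Real.exp_pos _) hne
  set k : ℝ := ∑ i, (if c i = M then (1:ℝ) else 0) with hk
  have hkpos : 0 < k := by
    rw [hk]
    refine Finset.sum_pos' (fun i _ => by positivity) ⟨i₀, Finset.mem_univ _, ?_⟩
    simp [hMi₀.symm]
  have hgt : Tendsto g atTop (nhds k) := by
    rw [hg, hk]
    apply tendsto_finset_sum
    intro i _
    by_cases h : c i = M
    · simp [h]
    · simp only [if_neg h]
      have hlt : c i - M < 0 := sub_neg.mpr (lt_of_le_of_ne (hcM i) h)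
      have h2 : Tendsto (fun s : ℝ => s * (c i - M)) atTop atBot :=
        tendsto_id.atTop_mul_const_of_neg hlt
      exact Real.tendsto_exp_atBot.comp h2
  have hlog : ∀ s : ℝ, Real.log (∑ i, Real.exp (s * c i)) = s * M + Real.log (g s) := by
    intro s
    have h1 : ∑ i, Real.exp (s * c i) = Real.exp (s * M) * g s := by
      rw [hg, Finset.mul_sum]
      refine Finset.sum_congr rfl fun i _ => ?_
      rw [← Real.exp_add]; ring_nf
    rw [h1, Real.log_mul (Real.exp_pos _).ne' (hgpos s).ne', Real.log_exp]
  have key : ∀ s : ℝ, u₀' (-(s • β)) - u₀ (-(s • β))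
      = Real.log (g (s + st)) - Real.log (g s) := by
    intro s
    rw [hu₀', hu₀]
    have h1 : ∀ i, ∑ j, p i j * ((-(s • β)) j - st * β j) = (s + st) * c i := by
      intro i
      rw [hc, Finset.mul_sum]
      refine Finset.sum_congr rfl fun j _ => ?_
      simp only [Pi.neg_apply, Pi.smul_apply, smul_eq_mul]; ring
    have h2 : ∀ i, ∑ j, p i j * (-(s • β)) j = s * c i := by
      intro i
      rw [hc, Finset.mul_sum]
      refine Finset.sum_congr rfl fun j _ => ?_
      simp only [Pi.neg_apply, Pi.smul_apply, smul_eq_mul]; ring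
    simp_rw [h1, h2, hlog]
    ring
  have ht : Tendsto (fun s => Real.log (g (s + st)) - Real.log (g s)) atTop (nhds 0) := by
    have hlg : Tendsto (fun s => Real.log (g s)) atTop (nhds (Real.log k)) :=
      (Real.continuousAt_log hkpos.ne').tendsto.comp hgt
    have hlg2 : Tendsto (fun s => Real.log (g (s + st))) atTop (nhds (Real.log k)) :=
      hlg.comp (tendsto_atTop_add_const_right _ st tendsto_id)
    simpa using hlg2.sub hlg
  have part1 : Tendsto (fun s : ℝ => u₀' (-(s • β)) - u₀ (-(s • β))) atTop (nhds 0) :=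
    (tendsto_congr key).mpr ht
  have hle : ∀ x, u₀' x - u₀ x ≤ 0 := by
    intro x
    rw [hu₀', hu₀]
    have hpos : (0:ℝ) < ∑ i, Real.exp (∑ j, p i j * x j) :=
      Finset.sum_pos (fun i _ => Real.exp_pos _) hne
    have hsum : ∑ i, Real.exp (∑ j, p i j * (x j - st * β j))
        ≤ Real.exp (st * M) * ∑ i, Real.exp (∑ j, p i j * x j) := by
      rw [Finset.mul_sum]
      refine Finset.sum_le_sum fun i _ => ?_
      rw [← Real.exp_add]
      apply Real.exp_le_exp.mpr
      have h3 : ∑ j, p i j * (x j - st * β j) = (∑ j, p i j * x j) + st * c i := by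
        rw [hc, Finset.mul_sum, ← Finset.sum_add_distrib]
        refine Finset.sum_congr rfl fun j _ => by ring
      rw [h3]
      have := mul_le_mul_of_nonneg_left (hcM i) hst
      linarith
    have hlogle := Real.log_le_log (Finset.sum_pos (fun i _ => Real.exp_pos _) hne) hsum
    rw [Real.log_mul (Real.exp_pos _).ne' hpos.ne', Real.log_exp] at hlogle
    linarith
  have hbdd : BddAbove (Set.range fun x => u₀' x - u₀ x) :=
    ⟨0, by rintro _ ⟨x, rfl⟩; exact hle x⟩
  refine ⟨part1, le_antisymm (Real.iSup_le hle le_rfl) ?_⟩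
  exact le_of_tendsto part1
    (Filter.Eventually.of_forall fun s => le_ciSup hbdd (-(s • β)))
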